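/- Let d ≥ 1 and for each i ∈ {1,…,d} let x_{i,1},…,x_{i,N_i} ∈ (0,1) be pairwise distinct real numbers. Suppose ε > 0 satisfies ε ≤ x_{i,j} for all i,j and ε ≤ |x_{i,j} − x_{i,k}| for all i and all j ≠ k, and let δ be a real number with 0 < δ < min{1/2, 1/(1+ε)}. Let a_1,…,a_d be real numbers with (1/2)·(2/(εδ))^i < a_i < (2/(εδ))^i for each i. Then for any two functions π, ψ ∈ ∏_{i=1}^d {1,…,N_i} with π ≠ ψ, the sums F_π = Σ_{i=1}^d a_i x_{i,π(i)} and F_ψ = Σ_{i=1}^d a_i x_{i,ψ(i)} satisfy |F_π − F_ψ| > 1/δ. In particular the sums F_π are pairwise distinct. -/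

import Mathlib

set_option maxHeartbeats 800000

open Finset

/-- Lemma 4 of the paper: separation of the sums `F_π = Σ_i a_i x_{i,π(i)}`. -/
theorem stmt_0 (d : ℕ) (hd : 1 ≤ d) (N : Fin d → ℕ) (hN : ∀ i, 0 < N i)
    (x : (i : Fin d) → Fin (N i) → ℝ)
    (hx01 : ∀ i j, x i j ∈ Set.Ioo (0 : ℝ) 1)
    (hxinj : ∀ i, Function.Injective (x i))
    (ε : ℝ) (hε : 0 < ε)
    (hεle : ∀ i j, ε ≤ x i j)
    (hεsep : ∀ i, ∀ j k : Fin (N i), j ≠ k → ε ≤ |x i j - x i k|)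
    (δ : ℝ) (hδ0 : 0 < δ) (hδ : δ < min (1/2) (1/(1+ε)))
    (a : Fin d → ℝ)
    (ha : ∀ i : Fin d, (1/2) * (2/(ε*δ))^((i : ℕ)+1) < a i ∧ a i < (2/(ε*δ))^((i : ℕ)+1))
    (π ψ : (i : Fin d) → Fin (N i)) (hπψ : π ≠ ψ) :
    |(∑ i, a i * x i (π i)) - (∑ i, a i * x i (ψ i))| > 1/δ := by
  set r : ℝ := 2/(ε*δ) with hr_def
  have hδhalf : δ < 1/2 := lt_of_lt_of_le hδ (min_le_left _ _)
  have hεδpos : 0 < ε * δ := mul_pos hε hδ0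
  have hεδlt1 : ε * δ < 1 := by
    have h1 : δ < 1/(1+ε) := lt_of_lt_of_le hδ (min_le_right _ _)
    have h2 : 0 < 1 + ε := by linarith
    have : ε * δ < ε * (1/(1+ε)) := by
      exact mul_lt_mul_of_pos_left h1 hε
    have h3 : ε * (1/(1+ε)) < 1 := by
      rw [mul_one_div, div_lt_one h2]; linarith
    linarith
  have hr2 : 2 < r := by
    rw [hr_def, lt_div_iff₀ hεδpos]; nlinarith
  have hrpos : 0 < r := by linarith
  have hapos : ∀ i, 0 < a i := fun i => lt_trans (by positivity) (ha i).1
  -- the summand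
  set S : Fin d → ℝ := fun i => a i * (x i (π i) - x i (ψ i)) with hS_def
  have hgoal_eq : (∑ i, a i * x i (π i)) - (∑ i, a i * x i (ψ i)) = ∑ i, S i := by
    rw [← Finset.sum_sub_distrib]
    exact Finset.sum_congr rfl (fun i _ => by rw [hS_def]; ring)
  rw [hgoal_eq]
  -- maximal index of disagreement
  obtain ⟨i₀, hi₀⟩ := Function.ne_iff.mp hπψ
  set T : Finset (Fin d) := univ.filter (fun i => π i ≠ ψ i) with hT_def
  have hTne : T.Nonempty := ⟨i₀, by simp [hT_def, hi₀]⟩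
  set m : Fin d := T.max' hTne with hm_def
  have hm_mem : π m ≠ ψ m := by
    have := T.max'_mem hTne
    simp [hT_def] at this; exact this
  have hm_max : ∀ i : Fin d, π i ≠ ψ i → i ≤ m := by
    intro i hi
    exact Finset.le_max' T i (by simp [hT_def, hi])
  -- bound on |S i| for i ≠ m
  have hSm : r^(m:ℕ)/δ < |S m| := by
    have hsep : ε ≤ |x m (π m) - x m (ψ m)| := hεsep m _ _ hm_mem
    have : |S m| = a m * |x m (π m) - x m (ψ m)| := by
      rw [hS_def, abs_mul, abs_of_pos (hapos m)]
    rw [this]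
    have h1 : a m * ε ≤ a m * |x m (π m) - x m (ψ m)| :=
      mul_le_mul_of_nonneg_left hsep (le_of_lt (hapos m))
    have h2 : (1/2) * r^((m:ℕ)+1) * ε < a m * ε :=
      mul_lt_mul_of_pos_right (ha m).1 hε
    have h3 : (1/2) * r^((m:ℕ)+1) * ε = r^(m:ℕ)/δ := by
      rw [pow_succ, hr_def]
      field_simp
    linarith
  have hSabs : ∀ i : Fin d, i ∈ univ.erase m →
      |S i| ≤ (if (i:ℕ) < (m:ℕ) then r^((i:ℕ)+1) else 0) := by
    intro i hi
    rw [Finset.mem_erase] at hi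
    by_cases hlt : (i:ℕ) < (m:ℕ)
    · rw [if_pos hlt]
      have hd1 : |x i (π i) - x i (ψ i)| ≤ 1 := by
        have h1 := hx01 i (π i)
        have h2 := hx01 i (ψ i)
        rw [Set.mem_Ioo] at h1 h2
        rw [abs_le]; constructor <;> linarith
      have : |S i| = a i * |x i (π i) - x i (ψ i)| := by
        rw [hS_def, abs_mul, abs_of_pos (hapos i)]
      rw [this]
      calc a i * |x i (π i) - x i (ψ i)| ≤ a i * 1 :=
            mul_le_mul_of_nonneg_left hd1 (le_of_lt (hapos i))
        _ = a i := mul_one _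
        _ ≤ r^((i:ℕ)+1) := le_of_lt (ha i).2
    · rw [if_neg hlt]
      have him : π i = ψ i := by
        by_contra h
        have := hm_max i h
        have hne : i ≠ m := hi.1
        have : (i:ℕ) < (m:ℕ) := lt_of_le_of_ne (Fin.le_iff_val_le_val.mp this)
          (fun hc => hne (Fin.ext hc))
        exact hlt this
      simp [hS_def, him]
  -- sum of error terms
  have hB : ∑ i ∈ univ.erase m, |S i| ≤ r * (r^(m:ℕ) - 1)/(r - 1) := by
    calc ∑ i ∈ univ.erase m, |S i|
        ≤ ∑ i ∈ univ.erase m, (if (i:ℕ) < (m:ℕ) then r^((i:ℕ)+1) else 0) :=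
          Finset.sum_le_sum hSabs
      _ ≤ ∑ i : Fin d, (if (i:ℕ) < (m:ℕ) then r^((i:ℕ)+1) else 0) := by
          apply Finset.sum_le_sum_of_subset_of_nonneg (Finset.erase_subset _ _)
          intro i _ _
          split <;> positivity
      _ = ∑ j ∈ Finset.range d, (if j < (m:ℕ) then r^(j+1) else 0) :=
          Fin.sum_univ_eq_sum_range (fun j => if j < (m:ℕ) then r^(j+1) else 0) d
      _ = ∑ j ∈ (Finset.range d).filter (fun j => j < (m:ℕ)), r^(j+1) :=
          (Finset.sum_filter _ _).symm
      _ = ∑ j ∈ Finset.range (m:ℕ), r^(j+1) := by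
          congr 1
          ext j
          simp only [Finset.mem_filter, Finset.mem_range]
          have := m.isLt
          omega
      _ = r * (r^(m:ℕ) - 1)/(r - 1) := by
          have hgeom : ∑ j ∈ Finset.range (m:ℕ), r^j = (r^(m:ℕ) - 1)/(r - 1) :=
            geom_sum_eq (by linarith) _
          calc ∑ j ∈ Finset.range (m:ℕ), r^(j+1)
              = ∑ j ∈ Finset.range (m:ℕ), r * r^j := by
                exact Finset.sum_congr rfl (fun j _ => by ring)
            _ = r * ∑ j ∈ Finset.range (m:ℕ), r^j := by rw [Finset.mul_sum]
            _ = r * (r^(m:ℕ) - 1)/(r - 1) := by rw [hgeom, mul_div_assoc]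
  -- combine
  have hsplit : ∑ i, S i = S m + ∑ i ∈ univ.erase m, S i :=
    (Finset.add_sum_erase univ S (Finset.mem_univ m)).symm
  have habs_err : |∑ i ∈ univ.erase m, S i| ≤ ∑ i ∈ univ.erase m, |S i| :=
    Finset.abs_sum_le_sum_abs _ _
  have hlow : |S m| - ∑ i ∈ univ.erase m, |S i| ≤ |∑ i, S i| := by
    have heq : (∑ i, S i) - ∑ i ∈ univ.erase m, S i = S m := by rw [hsplit]; ring
    have : |S m| ≤ |∑ i, S i| + |∑ i ∈ univ.erase m, S i| := by
      rw [← heq]; exact abs_sub _ _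
    linarith
  -- final arithmetic
  have hP : (1:ℝ) ≤ r^(m:ℕ) := one_le_pow₀ (by linarith : (1:ℝ) ≤ r)
  have hfinal : r * (r^(m:ℕ) - 1)/(r - 1) ≤ (r^(m:ℕ) - 1)/δ := by
    rw [div_le_div_iff₀ (by linarith) hδ0]
    nlinarith [mul_nonneg (sub_nonneg.mpr hP) (by nlinarith : (0:ℝ) ≤ r - 1 - δ*r)]
  have h1δ : r^(m:ℕ)/δ - (r^(m:ℕ) - 1)/δ = 1/δ := by field_simp; ring
  linarith
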